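/- arXiv:1709.05610 — 7 statements merged into one kernel-verified Lean document; each statement's English description precedes it below -/
import Mathlib

section
/- Let A, η ∈ C²(ℝ) be strictly convex, q' = η'A'. Define for u_L ≠ u_R: Λ := q(u_R) - q(u_L) - σ(η(u_R) - η(u_L)), where σ = (A(u_R)-A(u_L))/(u_R-u_L). Then Λ = (1/(2(u_R - u_L))) ∬_{I×I} (η'(u) - η'(v))(A'(u) - A'(v)) dv du, where I is the closed interval with endpoints u_L and u_R. -/
open MeasureTheory

lemma stmt_1_aux (A η q : ℝ → ℝ)
    (hA : ContDiff ℝ 2 A) (hη : ContDiff ℝ 2 η)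
    (hqd : Differentiable ℝ q)
    (hq : ∀ u, deriv q u = deriv η u * deriv A u)
    (a b σ : ℝ) (hab : a < b)
    (hσ : σ = (A b - A a) / (b - a)) :
    q b - q a - σ * (η b - η a) =
      (1 / (2 * (b - a))) *
        ∫ u in Set.uIcc a b, ∫ v in Set.uIcc a b,
          (deriv η u - deriv η v) * (deriv A u - deriv A v) := by
  set f := deriv η with hf
  set g := deriv A with hg
  have cf : Continuous f := hη.continuous_deriv one_le_two
  have cg : Continuous g := hA.continuous_deriv one_le_two
  have cfg : Continuous (fun x => f x * g x) := cf.mul cg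
  -- FTC values
  have If : (∫ x in a..b, f x) = η b - η a :=
    intervalIntegral.integral_deriv_eq_sub
      (fun x _ => (hη.differentiable two_ne_zero).differentiableAt)
      (cf.intervalIntegrable a b)
  have Ig : (∫ x in a..b, g x) = A b - A a :=
    intervalIntegral.integral_deriv_eq_sub
      (fun x _ => (hA.differentiable two_ne_zero).differentiableAt)
      (cg.intervalIntegrable a b)
  have hdq : deriv q = fun x => f x * g x := funext hq
  have Ifg : (∫ x in a..b, f x * g x) = q b - q a := by
    rw [← hdq]
    exact intervalIntegral.integral_deriv_eq_sub
      (fun x _ => hqd.differentiableAt)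
      (by rw [hdq]; exact cfg.intervalIntegrable a b)
  -- inner integral
  have h1 : ∀ u, (∫ v in a..b, (f u - f v) * (g u - g v))
      = (b - a) * (f u * g u) - f u * (A b - A a) - (η b - η a) * g u + (q b - q a) := by
    intro u
    have e : (fun v => (f u - f v) * (g u - g v))
        = fun v => ((f u * g u - f u * g v) - f v * g u) + f v * g v := by
      funext v; ring
    rw [e, intervalIntegral.integral_add (by
          exact (((continuous_const.sub (continuous_const.mul cg)).sub
            (cf.mul continuous_const)).intervalIntegrable a b))
        (cfg.intervalIntegrable a b),
      intervalIntegral.integral_sub (f := fun v => f u * g u - f u * g v) (g := fun v => f v * g u) (by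
          exact ((continuous_const.sub (continuous_const.mul cg)).intervalIntegrable a b))
        ((cf.mul continuous_const).intervalIntegrable a b),
      intervalIntegral.integral_sub (f := fun _ => f u * g u) (g := fun v => f u * g v) (by
          exact (continuous_const.intervalIntegrable a b))
        ((continuous_const.mul cg).intervalIntegrable a b),
      intervalIntegral.integral_const, intervalIntegral.integral_const_mul,
      intervalIntegral.integral_mul_const, Ig, If, Ifg, smul_eq_mul]
  -- outer integral
  have h2 : (∫ u in a..b, ∫ v in a..b, (f u - f v) * (g u - g v))
      = 2 * (b - a) * (q b - q a) - 2 * (A b - A a) * (η b - η a) := by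
    have e : (fun u => ∫ v in a..b, (f u - f v) * (g u - g v))
        = fun u => (((b - a) * (f u * g u) - f u * (A b - A a)) - (η b - η a) * g u) + (q b - q a) := by
      funext u; rw [h1 u]
    rw [e, intervalIntegral.integral_add (by
          exact (((continuous_const.mul cfg).sub (cf.mul continuous_const)).sub
            (continuous_const.mul cg)).intervalIntegrable a b)
        (continuous_const.intervalIntegrable a b),
      intervalIntegral.integral_sub (f := fun x => (b - a) * (f x * g x) - f x * (A b - A a)) (g := fun x => (η b - η a) * g x) (by
          exact ((continuous_const.mul cfg).sub (cf.mul continuous_const)).intervalIntegrable a b)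
        ((continuous_const.mul cg).intervalIntegrable a b),
      intervalIntegral.integral_sub (f := fun x => (b - a) * (f x * g x)) (g := fun x => f x * (A b - A a)) (by
          exact (continuous_const.mul cfg).intervalIntegrable a b)
        ((cf.mul continuous_const).intervalIntegrable a b),
      intervalIntegral.integral_const, intervalIntegral.integral_const_mul,
      intervalIntegral.integral_const_mul, intervalIntegral.integral_mul_const,
      Ig, If, Ifg, smul_eq_mul]
    ring
  -- convert set integrals to interval integrals
  have hconv : (∫ u in Set.uIcc a b, ∫ v in Set.uIcc a b, (f u - f v) * (g u - g v))
      = ∫ u in a..b, ∫ v in a..b, (f u - f v) * (g u - g v) := by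
    rw [Set.uIcc_of_le hab.le]
    simp only [MeasureTheory.integral_Icc_eq_integral_Ioc,
      ← intervalIntegral.integral_of_le hab.le]
  rw [hconv, h2, hσ]
  have hba : b - a ≠ 0 := sub_ne_zero.mpr hab.ne'
  field_simp

theorem stmt_1 (A η q : ℝ → ℝ)
    (hA : ContDiff ℝ 2 A) (hAc : StrictConvexOn ℝ Set.univ A)
    (hη : ContDiff ℝ 2 η) (hηc : StrictConvexOn ℝ Set.univ η)
    (hqd : Differentiable ℝ q)
    (hq : ∀ u, deriv q u = deriv η u * deriv A u)
    (uL uR σ : ℝ) (hne : uL ≠ uR)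
    (hσ : σ = (A uR - A uL) / (uR - uL)) :
    q uR - q uL - σ * (η uR - η uL) =
      (1 / (2 * (uR - uL))) *
        ∫ u in Set.uIcc uL uR, ∫ v in Set.uIcc uL uR,
          (deriv η u - deriv η v) * (deriv A u - deriv A v) := by
  rcases lt_or_gt_of_ne hne with h | h
  · exact stmt_1_aux A η q hA hη hqd hq uL uR σ h hσ
  · have hσ' : σ = (A uL - A uR) / (uL - uR) := by
      rw [hσ, show A uL - A uR = -(A uR - A uL) by ring,
        show uL - uR = -(uR - uL) by ring, neg_div_neg_eq]
    have := stmt_1_aux A η q hA hη hqd hq uR uL σ h hσ'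
    rw [Set.uIcc_comm uR uL] at this
    set I := (∫ u in Set.uIcc uL uR, ∫ v in Set.uIcc uL uR,
      (deriv η u - deriv η v) * (deriv A u - deriv A v)) with hI
    have hc : (1 : ℝ) / (2 * (uL - uR)) = -(1 / (2 * (uR - uL))) := by
      rw [show 2 * (uL - uR) = -(2 * (uR - uL)) by ring, div_neg]
    rw [hc] at this
    linarith
end

section
/- Let η ∈ C² be strictly convex with η'' > 0 and let A be strictly convex. If u_L > u_R and u ∈ ℝ satisfies η(u|u_L) = η(u|u_R), then q(u;u_R) - q(u;u_L) < 0, where η(a|b) := η(a) - η(b) - η'(b)(a-b) is the relative entropy and q(a;b) := q(a) - q(b) - η'(b)(A(a) - A(b)) is the relative entropy flux. -/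
theorem stmt_3 (A η q : ℝ → ℝ)
    (hA : ContDiff ℝ 2 A) (hAc : StrictConvexOn ℝ Set.univ A)
    (hη : ContDiff ℝ 2 η) (hηpos : ∀ u, 0 < deriv (deriv η) u)
    (hηc : StrictConvexOn ℝ Set.univ η)
    (hqd : Differentiable ℝ q)
    (hq : ∀ u, deriv q u = deriv η u * deriv A u)
    (uL uR u : ℝ) (hlt : uR < uL)
    (heq : η u - η uL - deriv η uL * (u - uL) = η u - η uR - deriv η uR * (u - uR)) :
    (q u - q uR - deriv η uR * (A u - A uR)) -
      (q u - q uL - deriv η uL * (A u - A uL)) < 0 := by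
  have hηd : Differentiable ℝ η := hη.differentiable (by norm_num)
  have hAd : Differentiable ℝ A := hA.differentiable (by norm_num)
  have hη2 : ContDiff ℝ ((1 : ℕ) + 1) η := by exact_mod_cast hη
  have hη'd : Differentiable ℝ (deriv η) :=
    (contDiff_succ_iff_deriv.mp hη2).2.2.differentiable (by norm_num)
  set H : ℝ → ℝ := fun v => q u - q v - deriv η v * (A u - A v)
      - deriv A u * (η u - η v - deriv η v * (u - v)) with hH
  have key : ∀ v, HasDerivAt H
      (deriv (deriv η) v * (A v - A u - deriv A u * (v - u))) v := by
    intro v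
    have h1 : HasDerivAt q (deriv η v * deriv A v) v := by
      have := (hqd v).hasDerivAt; rwa [hq v] at this
    have h2 : HasDerivAt (deriv η) (deriv (deriv η) v) v := (hη'd v).hasDerivAt
    have h3 : HasDerivAt A (deriv A v) v := (hAd v).hasDerivAt
    have h4 : HasDerivAt η (deriv η v) v := (hηd v).hasDerivAt
    have T2 := h2.mul ((hasDerivAt_const v (A u)).sub h3)
    have T3 := (((hasDerivAt_const v (η u)).sub h4).sub
        (h2.mul ((hasDerivAt_const v u).sub (hasDerivAt_id v)))).const_mul (deriv A u)
    have := (((hasDerivAt_const v (q u)).sub h1).sub T2).sub T3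
    refine this.congr_deriv ?_
    simp only [Pi.sub_apply, id]
    ring
  have hconv : ∀ v, v ≠ u → 0 < A v - A u - deriv A u * (v - u) := by
    intro v hv
    rcases lt_or_gt_of_ne hv with h | h
    · have := hAc.slope_lt_deriv (Set.mem_univ v) (Set.mem_univ u) h (hAd u)
      rw [slope_def_field] at this
      have huv : 0 < u - v := by linarith
      rw [div_lt_iff₀ huv] at this
      nlinarith
    · have := hAc.deriv_lt_slope (Set.mem_univ u) (Set.mem_univ v) h (hAd u)
      rw [slope_def_field] at this
      have huv : 0 < v - u := by linarith
      rw [lt_div_iff₀ huv] at this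
      nlinarith
  have hpos : ∀ v, v ≠ u → 0 < deriv H v := by
    intro v hv
    rw [(key v).deriv]
    exact mul_pos (hηpos v) (hconv v hv)
  have hcont : Continuous H := by
    have : Differentiable ℝ H := fun v => (key v).differentiableAt
    exact this.continuous
  have smon : ∀ a b : ℝ, a < b → (∀ v, a < v → v < b → v ≠ u) → H a < H b := by
    intro a b hab hne
    have := strictMonoOn_of_deriv_pos (convex_Icc a b) hcont.continuousOn
      (fun v hv => by
        rw [interior_Icc] at hv
        exact hpos v (hne v hv.1 hv.2))
    exact this (Set.left_mem_Icc.2 hab.le) (Set.right_mem_Icc.2 hab.le) hab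
  have hmain : H uR < H uL := by
    rcases le_or_gt u uR with h | h
    · exact smon uR uL hlt (fun v hv _ => by linarith)
    · rcases le_or_gt uL u with h' | h'
      · exact smon uR uL hlt (fun v _ hv => by linarith)
      · have h1 : H uR < H u := smon uR u h (fun v _ hv => by linarith)
        have h2 : H u < H uL := smon u uL h' (fun v hv _ => by linarith)
        linarith
  simp only [hH] at hmain
  have h2 := congrArg (fun t => deriv A u * t) heq
  linarith
end

section
/- Let A, η ∈ C²(ℝ) be strictly convex with entropy flux q, q' = η'A'. If u > u_L > u_R, then η(u|u_R) - η(u|u_L) > 0 and, whenever this difference is nonzero, (q(u;u_R) - q(u;u_L))/(η(u|u_R) - η(u|u_L)) < A'(u). -/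
open Set

lemma mono_deriv_nonneg {g : ℝ → ℝ} (hm : Monotone g) (x : ℝ) : 0 ≤ deriv g x := by
  by_cases hd : DifferentiableAt ℝ g x
  · have h := hasDerivAt_iff_tendsto_slope.mp hd.hasDerivAt
    have h2 : Filter.Tendsto (slope g x) (nhdsWithin x (Ioi x)) (nhds (deriv g x)) :=
      h.mono_left (nhdsWithin_mono x (fun y hy => ne_of_gt hy))
    refine ge_of_tendsto h2 ?_
    filter_upwards [self_mem_nhdsWithin] with y hy
    have : (0:ℝ) < y - x := sub_pos.mpr hy
    simp only [slope_def_field, div_nonneg_iff]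
    left
    exact ⟨sub_nonneg.mpr (hm (le_of_lt hy)), le_of_lt this⟩
  · simp [deriv_zero_of_not_differentiableAt hd]

theorem stmt_9 (A η q : ℝ → ℝ)
    (hA : ContDiff ℝ 2 A) (hAc : StrictConvexOn ℝ Set.univ A)
    (hη : ContDiff ℝ 2 η) (hηc : StrictConvexOn ℝ Set.univ η)
    (hqd : Differentiable ℝ q)
    (hq : ∀ u, deriv q u = deriv η u * deriv A u)
    (u uL uR : ℝ) (h1 : uR < uL) (h2 : uL < u) :
    0 < (η u - η uR - deriv η uR * (u - uR)) - (η u - η uL - deriv η uL * (u - uL)) ∧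
      ((q u - q uR - deriv η uR * (A u - A uR)) -
          (q u - q uL - deriv η uL * (A u - A uL))) /
        ((η u - η uR - deriv η uR * (u - uR)) -
          (η u - η uL - deriv η uL * (u - uL))) < deriv A u := by
  -- differentiability
  have hη11 : ContDiff ℝ (1+1) η := by exact_mod_cast hη
  have hA11 : ContDiff ℝ (1+1) A := by exact_mod_cast hA
  have hηd : Differentiable ℝ η := (contDiff_succ_iff_deriv.mp hη11).1
  have hηd2 : Differentiable ℝ (deriv η) :=
    (contDiff_succ_iff_deriv.mp hη11).2.2.differentiable one_ne_zero
  have hAd : Differentiable ℝ A := (contDiff_succ_iff_deriv.mp hA11).1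
  have hAd2 : Differentiable ℝ (deriv A) :=
    (contDiff_succ_iff_deriv.mp hA11).2.2.differentiable one_ne_zero
  have Hη : ∀ r, HasDerivAt η (deriv η r) r := fun r => (hηd r).hasDerivAt
  have Hη2 : ∀ r, HasDerivAt (deriv η) (deriv (deriv η) r) r := fun r => (hηd2 r).hasDerivAt
  have HA : ∀ r, HasDerivAt A (deriv A r) r := fun r => (hAd r).hasDerivAt
  have Hq : ∀ r, HasDerivAt q (deriv q r) r := fun r => (hqd r).hasDerivAt
  -- strict monotonicity of derivatives
  have hηm : StrictMono (deriv η) :=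
    strictMonoOn_univ.mp (hηc.strictMonoOn_deriv (fun x _ => hηd x))
  have hAm : StrictMono (deriv A) :=
    strictMonoOn_univ.mp (hAc.strictMonoOn_deriv (fun x _ => hAd x))
  have hη2 : ∀ r, 0 ≤ deriv (deriv η) r := mono_deriv_nonneg hηm.monotone
  have huL : (0:ℝ) < u - uL := sub_pos.mpr h2
  have hΔ : deriv η uR < deriv η uL := hηm h1
  -- tangent inequality at u for A relative to uL
  have tangA : A u - A uL < deriv A u * (u - uL) := by
    have h := hAc.slope_lt_deriv (mem_univ uL) (mem_univ u) h2 (hAd u)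
    rw [slope_def_field] at h
    exact (div_lt_iff₀ huL).mp h
  -- secant bound on the interval
  have sec : ∀ r ∈ Ioo uR uL, A uL - A r ≤ deriv A u * (uL - r) := by
    intro r hr
    have hru : (0:ℝ) < uL - r := sub_pos.mpr hr.2
    have h := hAc.slope_lt_deriv (mem_univ r) (mem_univ uL) hr.2 (hAd uL)
    rw [slope_def_field] at h
    have h' : A uL - A r < deriv A uL * (uL - r) := (div_lt_iff₀ hru).mp h
    have hAu : deriv A uL < deriv A u := hAm h2
    nlinarith
  -- Step 1: positivity of the relative-entropy difference
  have mono1 : MonotoneOn (fun r => η r + deriv η r * (u - r) - (u - uL) * deriv η r)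
      (Icc uR uL) := by
    apply monotoneOn_of_hasDerivWithinAt_nonneg (f' := fun x => deriv (deriv η) x * (uL - x))
      (convex_Icc uR uL)
    · exact ((hηd.continuous.add (hηd2.continuous.mul (continuous_const.sub continuous_id))).sub
        (continuous_const.mul hηd2.continuous)).continuousOn
    · intro x hx
      have h := (((Hη x).add ((Hη2 x).mul ((hasDerivAt_id x).const_sub u))).sub
        ((Hη2 x).const_mul (u - uL)))
      have h' : HasDerivAt (fun r => η r + deriv η r * (u - r) - (u - uL) * deriv η r)
          (deriv (deriv η) x * (uL - x)) x := by
        exact h.congr_deriv (by simp only [id_eq]; ring)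
      exact h'.hasDerivWithinAt
    · intro x hx
      rw [interior_Icc] at hx
      exact mul_nonneg (hη2 x) (sub_nonneg.mpr hx.2.le)
  have step1 : η uR + deriv η uR * (u - uR) - (u - uL) * deriv η uR ≤
      η uL + deriv η uL * (u - uL) - (u - uL) * deriv η uL :=
    mono1 (left_mem_Icc.mpr h1.le) (right_mem_Icc.mpr h1.le) h1.le
  have hE : 0 < (η u - η uR - deriv η uR * (u - uR)) -
      (η u - η uL - deriv η uL * (u - uL)) := by
    nlinarith [mul_pos huL (sub_pos.mpr hΔ)]
  refine ⟨hE, ?_⟩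
  -- Step 2
  set c₂ : ℝ := deriv A u * (u - uL) - (A u - A uL) with hc₂def
  have hc₂ : 0 < c₂ := by simp only [hc₂def]; linarith
  have mono2 : MonotoneOn (fun r => -(q r) - deriv η r * (A u - A r)
      + deriv A u * (η r + deriv η r * (u - r)) - c₂ * deriv η r) (Icc uR uL) := by
    apply monotoneOn_of_hasDerivWithinAt_nonneg
      (f' := fun x => deriv (deriv η) x * ((deriv A u * (u - x) - (A u - A x)) - c₂))
      (convex_Icc uR uL)
    · exact (((hqd.continuous.neg.sub
        (hηd2.continuous.mul (continuous_const.sub hAd.continuous))).add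
        (continuous_const.mul (hηd.continuous.add
          (hηd2.continuous.mul (continuous_const.sub continuous_id))))).sub
        (continuous_const.mul hηd2.continuous)).continuousOn
    · intro x hx
      have h := ((((Hq x).neg.sub ((Hη2 x).mul ((HA x).const_sub (A u)))).add
        (((Hη x).add ((Hη2 x).mul ((hasDerivAt_id x).const_sub u))).const_mul (deriv A u))).sub
        ((Hη2 x).const_mul c₂))
      have h' : HasDerivAt (fun r => -(q r) - deriv η r * (A u - A r)
          + deriv A u * (η r + deriv η r * (u - r)) - c₂ * deriv η r)
          (deriv (deriv η) x * ((deriv A u * (u - x) - (A u - A x)) - c₂)) x := by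
        exact h.congr_deriv (by rw [hq x]; simp only [id_eq]; ring)
      exact h'.hasDerivWithinAt
    · intro x hx
      rw [interior_Icc] at hx
      refine mul_nonneg (hη2 x) ?_
      have h := sec x hx
      simp only [hc₂def]
      linarith
  have step2 : -(q uR) - deriv η uR * (A u - A uR)
      + deriv A u * (η uR + deriv η uR * (u - uR)) - c₂ * deriv η uR ≤
      -(q uL) - deriv η uL * (A u - A uL)
      + deriv A u * (η uL + deriv η uL * (u - uL)) - c₂ * deriv η uL :=
    mono2 (left_mem_Icc.mpr h1.le) (right_mem_Icc.mpr h1.le) h1.le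
  rw [div_lt_iff₀ hE]
  nlinarith [mul_pos hc₂ (sub_pos.mpr hΔ)]
end

section
/- Let A, η ∈ C²(ℝ) be strictly convex with entropy flux q, q' = η'A'. If u_R ≤ u ≤ u_L and η(u|u_R) ≠ η(u|u_L), then (q(u;u_R) - q(u;u_L))/|η(u|u_R) - η(u|u_L)| < A'(u)·sgn(η(u|u_R) - η(u|u_L)). -/
open Set

private lemma mono_deriv_nonneg_s11 {f : ℝ → ℝ} (hf : Monotone f) (x : ℝ)
    (hd : DifferentiableAt ℝ f x) : 0 ≤ deriv f x := by
  have h := hd.hasDerivAt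
  rw [hasDerivAt_iff_tendsto_slope] at h
  have h' : Filter.Tendsto (slope f x) (nhdsWithin x (Set.Ioi x)) (nhds (deriv f x)) :=
    h.mono_left (nhdsWithin_mono x fun y hy => ne_of_gt hy)
  refine ge_of_tendsto h' ?_
  filter_upwards [self_mem_nhdsWithin] with y hy
  have hxy : x < y := hy
  rw [slope_def_field, div_eq_inv_mul]
  exact mul_nonneg (inv_nonneg.2 (sub_nonneg.2 hxy.le)) (sub_nonneg.2 (hf hxy.le))

theorem stmt_11 (A η q : ℝ → ℝ)
    (hA : ContDiff ℝ 2 A) (hAc : StrictConvexOn ℝ Set.univ A)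
    (hη : ContDiff ℝ 2 η) (hηc : StrictConvexOn ℝ Set.univ η)
    (hqd : Differentiable ℝ q)
    (hq : ∀ u, deriv q u = deriv η u * deriv A u)
    (u uL uR : ℝ) (h1 : uR ≤ u) (h2 : u ≤ uL)
    (hne : (η u - η uR - deriv η uR * (u - uR)) -
        (η u - η uL - deriv η uL * (u - uL)) ≠ 0) :
    ((q u - q uR - deriv η uR * (A u - A uR)) -
        (q u - q uL - deriv η uL * (A u - A uL))) /
      |(η u - η uR - deriv η uR * (u - uR)) -
        (η u - η uL - deriv η uL * (u - uL))| <
      deriv A u *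
        Real.sign ((η u - η uR - deriv η uR * (u - uR)) -
          (η u - η uL - deriv η uL * (u - uL))) := by
  -- basic differentiability
  have hAd : Differentiable ℝ A := hA.differentiable two_ne_zero
  have hηd : Differentiable ℝ η := hη.differentiable two_ne_zero
  have hη2 : ContDiff ℝ (1 + 1) η := by norm_num; exact hη
  have hη'cd : ContDiff ℝ 1 (deriv η) := (contDiff_succ_iff_deriv.mp hη2).2.2
  have hη'd : Differentiable ℝ (deriv η) := hη'cd.differentiable one_ne_zero
  -- second derivative of η is nonnegative
  have hmono : Monotone (deriv η) := by
    have := hηc.convexOn.monotoneOn_deriv (fun x _ => hηd x)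
    exact monotoneOn_univ.mp this
  have he'' : ∀ v, 0 ≤ deriv (deriv η) v := fun v =>
    mono_deriv_nonneg_s11 hmono v (hη'd v)
  -- tangent line inequality for A at u
  have hφlt : ∀ v, v ≠ u → (A u - A v) - deriv A u * (u - v) < 0 := by
    intro v hv
    rcases lt_or_gt_of_ne hv with hlt | hgt
    · have := hAc.slope_lt_deriv (mem_univ v) (mem_univ u) hlt (hAd u)
      rw [slope_def_field] at this
      have huv : 0 < u - v := by linarith
      rw [div_lt_iff₀ huv] at this
      nlinarith
    · have := hAc.deriv_lt_slope (mem_univ u) (mem_univ v) hgt (hAd u)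
      rw [slope_def_field] at this
      have huv : 0 < v - u := by linarith
      rw [lt_div_iff₀ huv] at this
      nlinarith
  have hφle : ∀ v, (A u - A v) - deriv A u * (u - v) ≤ 0 := by
    intro v
    rcases eq_or_ne v u with rfl | hv
    · simp
    · exact (hφlt v hv).le
  -- the three auxiliary functions
  set H : ℝ → ℝ := fun v => η u - η v - deriv η v * (u - v) with hHdef
  set G : ℝ → ℝ := fun v => q u - q v - deriv η v * (A u - A v) with hGdef
  set Φ : ℝ → ℝ := fun v => deriv A u * H v - G v with hΦdef
  have hH : ∀ v, HasDerivAt H (-(deriv (deriv η) v * (u - v))) v := by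
    intro v
    have e1 : HasDerivAt (fun w => η u - η w) (-(deriv η v)) v :=
      ((hηd v).hasDerivAt).const_sub (η u)
    have e2 : HasDerivAt (deriv η) (deriv (deriv η) v) v := (hη'd v).hasDerivAt
    have e3 : HasDerivAt (fun w => u - w) (-1) v := by
      simpa using (hasDerivAt_id v).const_sub u
    have := e1.sub (e2.mul e3)
    exact this.congr_deriv (by ring)
  have hG : ∀ v, HasDerivAt G (-(deriv (deriv η) v * (A u - A v))) v := by
    intro v
    have e1 : HasDerivAt (fun w => q u - q w) (-(deriv η v * deriv A v)) v := by
      have := ((hqd v).hasDerivAt).const_sub (q u)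
      rwa [hq v] at this
    have e2 : HasDerivAt (deriv η) (deriv (deriv η) v) v := (hη'd v).hasDerivAt
    have e3 : HasDerivAt (fun w => A u - A w) (-(deriv A v)) v :=
      ((hAd v).hasDerivAt).const_sub (A u)
    have := e1.sub (e2.mul e3)
    exact this.congr_deriv (by ring)
  have hΦ : ∀ v, HasDerivAt Φ
      (deriv (deriv η) v * ((A u - A v) - deriv A u * (u - v))) v := by
    intro v
    have := ((hH v).const_mul (deriv A u)).sub (hG v)
    exact this.congr_deriv (by ring)
  have hΦd : Differentiable ℝ Φ := fun v => (hΦ v).differentiableAt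
  have hΦderiv : ∀ v, deriv Φ v = deriv (deriv η) v * ((A u - A v) - deriv A u * (u - v)) :=
    fun v => (hΦ v).deriv
  -- Φ is antitone
  have hΦanti : Antitone Φ := by
    apply antitone_of_deriv_nonpos hΦd
    intro v
    rw [hΦderiv v]
    exact mul_nonpos_of_nonneg_of_nonpos (he'' v) (hφle v)
  have hle : Φ uL ≤ Φ uR := hΦanti (h1.trans h2)
  -- strictness
  have hkey : Φ uL < Φ uR := by
    rcases hle.lt_or_eq with h | heq
    · exact h
    · exfalso
      -- Φ is constant on [uR, uL]; first, uR < uL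
      have hRL : uR < uL := by
        rcases (h1.trans h2).lt_or_eq with h | h
        · exact h
        · exact absurd (by subst h; ring) hne
      -- Φ equals Φ uR on the closed interval
      have hconst : ∀ v ∈ Icc uR uL, Φ v = Φ uR := by
        intro v hv
        have l1 : Φ v ≤ Φ uR := hΦanti hv.1
        have l2 : Φ uL ≤ Φ v := hΦanti hv.2
        linarith [heq.symm.le]
      -- hence deriv Φ vanishes on the open interval
      have hzero : ∀ v ∈ Ioo uR uL, deriv (deriv η) v * ((A u - A v) - deriv A u * (u - v)) = 0 := by
        intro v hv
        have hmem : Icc uR uL ∈ nhds v := by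
          exact Filter.mem_of_superset (isOpen_Ioo.mem_nhds hv) Ioo_subset_Icc_self
        have hev : Φ =ᶠ[nhds v] fun _ => Φ uR := by
          filter_upwards [hmem] with w hw
          exact hconst w hw
        have : HasDerivAt Φ 0 v := by
          have hc : HasDerivAt (fun _ : ℝ => Φ uR) 0 v := hasDerivAt_const v _
          exact hc.congr_of_eventuallyEq hev
        exact (this.unique (hΦ v)).symm
      -- the second derivative of η vanishes off u on the open interval
      have he''zero : ∀ v ∈ Ioo uR uL, v ≠ u → deriv (deriv η) v = 0 := by
        intro v hv hvne
        have := hzero v hv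
        rcases mul_eq_zero.mp this with h | h
        · exact h
        · exact absurd h (ne_of_lt (hφlt v hvne))
      -- hence deriv H vanishes on the open interval
      have hHzero : ∀ v ∈ Ioo uR uL, deriv H v = 0 := by
        intro v hv
        rw [(hH v).deriv]
        rcases eq_or_ne v u with rfl | hvne
        · simp
        · rw [he''zero v hv hvne]; ring
      -- so H is constant on [uR, uL], contradicting hne
      have hHd : Differentiable ℝ H := fun v => (hH v).differentiableAt
      have hm : MonotoneOn H (Icc uR uL) := by
        apply monotoneOn_of_deriv_nonneg (convex_Icc uR uL) hHd.continuous.continuousOn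
          (hHd.differentiableOn)
        intro v hv
        rw [interior_Icc] at hv
        rw [hHzero v hv]
      have ha : AntitoneOn H (Icc uR uL) := by
        apply antitoneOn_of_deriv_nonpos (convex_Icc uR uL) hHd.continuous.continuousOn
          (hHd.differentiableOn)
        intro v hv
        rw [interior_Icc] at hv
        rw [hHzero v hv]
      have e1 : η u - η uR - deriv η uR * (u - uR) ≤ η u - η uL - deriv η uL * (u - uL) :=
        hm (left_mem_Icc.mpr hRL.le) (right_mem_Icc.mpr hRL.le) hRL.le
      have e2 : η u - η uL - deriv η uL * (u - uL) ≤ η u - η uR - deriv η uR * (u - uR) :=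
        ha (left_mem_Icc.mpr hRL.le) (right_mem_Icc.mpr hRL.le) hRL.le
      exact hne (by linarith)
  -- finish: convert the goal
  have hDne : H uR - H uL ≠ 0 := hne
  have habs : 0 < |H uR - H uL| := abs_pos.mpr hDne
  show (G uR - G uL) / |H uR - H uL| < deriv A u * Real.sign (H uR - H uL)
  rw [div_lt_iff₀ habs]
  have hsgn : Real.sign (H uR - H uL) * |H uR - H uL| = H uR - H uL := by
    rcases hDne.lt_or_gt with h | h
    · rw [Real.sign_of_neg h, abs_of_neg h]; ring
    · rw [Real.sign_of_pos h, abs_of_pos h]; ring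
  calc G uR - G uL < deriv A u * (H uR - H uL) := by
        have := hkey
        rw [hΦdef] at this
        simp only at this
        linarith
    _ = deriv A u * Real.sign (H uR - H uL) * |H uR - H uL| := by
        rw [mul_assoc, hsgn]
end

section
/- Define, for ε > 0 and u_L ≥ u_R, V_ε(u, u_L, u_R) := [q(u;u_R) - q(u;u_L) - ε]_+ / (η(u|u_R) - η(u|u_L)) if η(u|u_R) ≠ η(u|u_L), and 0 otherwise, where [x]_+ = max(0,x). Then |V_ε(u, u_L, u_R)| ≤ |A'(u)| for all such (u, u_L, u_R). -/
lemma convex_tangent_aux {f : ℝ → ℝ} (hf : ConvexOn ℝ Set.univ f)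
    (hd : Differentiable ℝ f) (x y : ℝ) :
    f x + deriv f x * (y - x) ≤ f y := by
  rcases lt_trichotomy x y with hxy | rfl | hyx
  · have h1 := hf.deriv_le_slope (Set.mem_univ x) (Set.mem_univ y) hxy (hd x)
    rw [slope_def_field] at h1
    have h2 : 0 < y - x := by linarith
    rw [div_eq_inv_mul] at h1
    nlinarith [(le_inv_mul_iff₀ h2).mp h1]
  · simp
  · have h1 := hf.slope_le_deriv (Set.mem_univ y) (Set.mem_univ x) hyx (hd x)
    rw [slope_def_field] at h1
    have h2 : 0 < x - y := by linarith
    rw [div_eq_inv_mul] at h1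
    nlinarith [(inv_mul_le_iff₀ h2).mp h1]

lemma mono_deriv_nonneg_aux {g : ℝ → ℝ} (hg : Monotone g) {v : ℝ}
    (hd : DifferentiableAt ℝ g v) : 0 ≤ deriv g v := by
  have h := hd.hasDerivAt
  rw [hasDerivAt_iff_tendsto_slope] at h
  refine le_of_tendsto_of_tendsto tendsto_const_nhds h ?_
  filter_upwards [self_mem_nhdsWithin] with x hx
  rcases lt_or_gt_of_ne (Ne.symm hx) with hlt | hgt
  · have : g v ≤ g x := hg hlt.le
    rw [slope_def_field]
    apply div_nonneg <;> linarith
  · have : g x ≤ g v := hg hgt.le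
    rw [slope_def_field]
    exact div_nonneg_iff.mpr (Or.inr ⟨by linarith, by linarith⟩)

theorem stmt_12 (A η q : ℝ → ℝ)
    (hA : ContDiff ℝ 2 A) (hAc : StrictConvexOn ℝ Set.univ A)
    (hη : ContDiff ℝ 2 η) (hηc : StrictConvexOn ℝ Set.univ η)
    (hqd : Differentiable ℝ q)
    (hq : ∀ u, deriv q u = deriv η u * deriv A u)
    (ε : ℝ) (hε : 0 < ε)
    (u uL uR : ℝ) (h : uR ≤ uL) :
    |(if (η u - η uR - deriv η uR * (u - uR)) -
            (η u - η uL - deriv η uL * (u - uL)) = 0 then (0 : ℝ)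
      else
        max 0 ((q u - q uR - deriv η uR * (A u - A uR)) -
            (q u - q uL - deriv η uL * (A u - A uL)) - ε) /
          ((η u - η uR - deriv η uR * (u - uR)) -
            (η u - η uL - deriv η uL * (u - uL))))| ≤ |deriv A u| := by
  have hAd : Differentiable ℝ A := hA.differentiable (by norm_num)
  have hηd : Differentiable ℝ η := hη.differentiable (by norm_num)
  have hη2 : ContDiff ℝ 2 η := hη
  have hη' : Differentiable ℝ (deriv η) := by
    have h2 : ContDiff ℝ ((1 : WithTop ℕ∞) + 1) η := by
      exact hη.of_le (by norm_num)
    rw [contDiff_succ_iff_deriv] at h2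
    exact h2.2.2.differentiable (by norm_num)
  -- monotonicity of deriv η
  have hmono : Monotone (deriv η) := by
    have := hηc.convexOn.monotoneOn_deriv (fun x _ => hηd x)
    rwa [monotoneOn_univ] at this
  have hη'' : ∀ v, 0 ≤ deriv (deriv η) v :=
    fun v => mono_deriv_nonneg_aux hmono (hη' v)
  have htangent : ∀ v, 0 ≤ A v - A u - deriv A u * (v - u) := by
    intro v
    have := convex_tangent_aux hAc.convexOn hAd u v
    linarith
  -- The key monotone function
  set Φ : ℝ → ℝ := fun v =>
    q u - q v - deriv η v * (A u - A v) -
      deriv A u * (η u - η v - deriv η v * (u - v)) with hΦdef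
  have hΦ : ∀ v, HasDerivAt Φ
      (0 - deriv q v - (deriv (deriv η) v * (A u - A v) + deriv η v * (0 - deriv A v)) -
        deriv A u * (0 - deriv η v -
          (deriv (deriv η) v * (u - v) + deriv η v * (0 - 1)))) v := by
    intro v
    have hqv := (hqd v).hasDerivAt
    have hηv := (hηd v).hasDerivAt
    have hη'v := (hη' v).hasDerivAt
    have hAv := (hAd v).hasDerivAt
    have H := (((hasDerivAt_const v (q u)).sub hqv).sub
      (hη'v.mul ((hasDerivAt_const v (A u)).sub hAv))).sub
      ((((hasDerivAt_const v (η u)).sub hηv).sub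
        (hη'v.mul ((hasDerivAt_const v u).sub (hasDerivAt_id v)))).const_mul (deriv A u))
    exact H
  have hΦmono : Monotone Φ := by
    apply monotone_of_deriv_nonneg (fun v => (hΦ v).differentiableAt)
    intro v
    rw [(hΦ v).deriv, hq v]
    nlinarith [mul_nonneg (hη'' v) (htangent v)]
  have key := hΦmono h
  simp only [hΦdef] at key
  -- abbreviations
  set N : ℝ := (q u - q uR - deriv η uR * (A u - A uR)) -
      (q u - q uL - deriv η uL * (A u - A uL)) with hN
  set D : ℝ := (η u - η uR - deriv η uR * (u - uR)) -
      (η u - η uL - deriv η uL * (u - uL)) with hD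
  have hkey : N ≤ deriv A u * D := by rw [hN, hD]; nlinarith [key]
  split_ifs with hD0
  · simp
  · rw [abs_div, div_le_iff₀ (abs_pos.mpr hD0),
      abs_of_nonneg (le_max_left 0 _)]
    apply max_le
    · positivity
    · have h1 : deriv A u * D ≤ |deriv A u * D| := le_abs_self _
      rw [abs_mul] at h1
      linarith
end

section
/- The function V_ε (defined as in the preceding context) is continuous on the set {(u, u_L, u_R) ∈ ℝ³ : u_L ≥ u_R}; in particular, V_ε vanishes on a neighborhood of the set where η(u|u_R) = η(u|u_L). -/
noncomputable def Veps (A η q : ℝ → ℝ) (ε : ℝ) (p : ℝ × ℝ × ℝ) : ℝ :=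
  if (η p.1 - η p.2.2 - deriv η p.2.2 * (p.1 - p.2.2)) -
      (η p.1 - η p.2.1 - deriv η p.2.1 * (p.1 - p.2.1)) = 0 then 0
  else
    max 0 ((q p.1 - q p.2.2 - deriv η p.2.2 * (A p.1 - A p.2.2)) -
        (q p.1 - q p.2.1 - deriv η p.2.1 * (A p.1 - A p.2.1)) - ε) /
      ((η p.1 - η p.2.2 - deriv η p.2.2 * (p.1 - p.2.2)) -
        (η p.1 - η p.2.1 - deriv η p.2.1 * (p.1 - p.2.1)))

/-- Denominator function. -/
noncomputable def Dfun (η : ℝ → ℝ) (p : ℝ × ℝ × ℝ) : ℝ :=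
  (η p.1 - η p.2.2 - deriv η p.2.2 * (p.1 - p.2.2)) -
    (η p.1 - η p.2.1 - deriv η p.2.1 * (p.1 - p.2.1))

/-- Numerator function (without the ε shift). -/
noncomputable def Nfun (A η q : ℝ → ℝ) (p : ℝ × ℝ × ℝ) : ℝ :=
  (q p.1 - q p.2.2 - deriv η p.2.2 * (A p.1 - A p.2.2)) -
    (q p.1 - q p.2.1 - deriv η p.2.1 * (A p.1 - A p.2.1))

lemma Veps_eq (A η q : ℝ → ℝ) (ε : ℝ) (p : ℝ × ℝ × ℝ) :
    Veps A η q ε p = if Dfun η p = 0 then 0 else max 0 (Nfun A η q p - ε) / Dfun η p := rfl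

/-- A monotone function has nonnegative derivative wherever it is differentiable. -/
lemma mono_hasDerivAt_nonneg {f : ℝ → ℝ} (hf : Monotone f) {x d : ℝ}
    (h : HasDerivAt f d x) : 0 ≤ d := by
  have h' := hasDerivAt_iff_tendsto_slope.mp h
  refine ge_of_tendsto h' ?_
  filter_upwards [self_mem_nhdsWithin] with y hy
  rcases lt_or_gt_of_ne (hy : y ≠ x) with hlt | hgt
  · rw [slope_def_field]
    exact div_nonneg_iff.mpr (Or.inr ⟨by simpa using hf hlt.le, by linarith⟩)
  · rw [slope_def_field]
    exact div_nonneg (by simpa using hf hgt.le) (by linarith)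

/-- Supporting-line inequality for a strictly convex differentiable function. -/
lemma support_line {f : ℝ → ℝ} (hf : StrictConvexOn ℝ Set.univ f) (hfd : Differentiable ℝ f)
    (u c : ℝ) : f u - f c ≤ deriv f u * (u - c) := by
  rcases lt_trichotomy c u with h | h | h
  · have h1 := hf.slope_lt_deriv (Set.mem_univ c) (Set.mem_univ u) h (hfd u)
    rw [slope_def_field] at h1
    have hpos : 0 < u - c := sub_pos.2 h
    nlinarith [(div_lt_iff₀ hpos).mp h1]
  · simp [h]
  · have h1 := hf.deriv_lt_slope (Set.mem_univ u) (Set.mem_univ c) h (hfd u)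
    rw [slope_def_field] at h1
    have hpos : 0 < c - u := sub_pos.2 h
    nlinarith [(lt_div_iff₀ hpos).mp h1]

/-- The key inequality: if the relative entropies agree and `uR ≤ uL`, then the relative
flux difference is nonpositive. -/
lemma key_ineq (A η q : ℝ → ℝ)
    (hA : ContDiff ℝ 2 A) (hAc : StrictConvexOn ℝ Set.univ A)
    (hη : ContDiff ℝ 2 η) (hηc : StrictConvexOn ℝ Set.univ η)
    (hqd : Differentiable ℝ q)
    (hq : ∀ u, deriv q u = deriv η u * deriv A u)
    (u uL uR : ℝ) (hle : uR ≤ uL)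
    (hD : (η u - η uR - deriv η uR * (u - uR)) - (η u - η uL - deriv η uL * (u - uL)) = 0) :
    (q u - q uR - deriv η uR * (A u - A uR)) -
      (q u - q uL - deriv η uL * (A u - A uL)) ≤ 0 := by
  have hη' : ContDiff ℝ (1 + 1) η := by exact_mod_cast hη
  have hη2 : ContDiff ℝ 1 (deriv η) := (contDiff_succ_iff_deriv.mp hη').2.2
  have hηd : Differentiable ℝ η := hη.differentiable two_ne_zero
  have hAd : Differentiable ℝ A := hA.differentiable two_ne_zero
  have hη'd : Differentiable ℝ (deriv η) := hη2.differentiable one_ne_zero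
  have hη''c : Continuous (deriv (deriv η)) := hη2.continuous_deriv le_rfl
  -- derivative of the relative entropy in the base point
  have hh : ∀ c, HasDerivAt (fun c => η u - η c - deriv η c * (u - c))
      (-(deriv (deriv η) c * (u - c))) c := by
    intro c
    have h1 : HasDerivAt (fun c => η u - η c - deriv η c * (u - c)) _ c :=
      ((hasDerivAt_const c (η u)).sub (hηd c).hasDerivAt).sub
      (((hη'd c).hasDerivAt).mul ((hasDerivAt_const c u).sub (hasDerivAt_id' c)))
    convert h1 using 1
    ring
  have hg : ∀ c, HasDerivAt (fun c => q u - q c - deriv η c * (A u - A c))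
      (-(deriv (deriv η) c * (A u - A c))) c := by
    intro c
    have h1 : HasDerivAt (fun c => q u - q c - deriv η c * (A u - A c)) _ c :=
      ((hasDerivAt_const c (q u)).sub (hqd c).hasDerivAt).sub
      (((hη'd c).hasDerivAt).mul ((hasDerivAt_const c (A u)).sub (hAd c).hasDerivAt))
    convert h1 using 1
    rw [hq]
    ring
  have hcont1 : Continuous fun c => deriv (deriv η) c * (u - c) :=
    hη''c.mul (continuous_const.sub continuous_id)
  have hcont2 : Continuous fun c => deriv (deriv η) c * (A u - A c) :=
    hη''c.mul (continuous_const.sub hAd.continuous)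
  have e1 : ∫ c in uR..uL, -(deriv (deriv η) c * (u - c)) =
      (η u - η uL - deriv η uL * (u - uL)) - (η u - η uR - deriv η uR * (u - uR)) :=
    intervalIntegral.integral_eq_sub_of_hasDerivAt (fun c _ => hh c)
      (hcont1.neg.intervalIntegrable _ _)
  have e2 : ∫ c in uR..uL, -(deriv (deriv η) c * (A u - A c)) =
      (q u - q uL - deriv η uL * (A u - A uL)) - (q u - q uR - deriv η uR * (A u - A uR)) :=
    intervalIntegral.integral_eq_sub_of_hasDerivAt (fun c _ => hg c)
      (hcont2.neg.intervalIntegrable _ _)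
  rw [intervalIntegral.integral_neg] at e1 e2
  have hDint : ∫ c in uR..uL, deriv (deriv η) c * (u - c) = 0 := by linarith
  have hF : (q u - q uR - deriv η uR * (A u - A uR)) -
      (q u - q uL - deriv η uL * (A u - A uL)) =
      ∫ c in uR..uL, deriv (deriv η) c * (A u - A c) := by linarith
  -- nonnegativity of η''
  have hmono : Monotone (deriv η) :=
    (strictMonoOn_univ.mp (hηc.strictMonoOn_deriv fun x _ => hηd x)).monotone
  have hnn : ∀ c, 0 ≤ deriv (deriv η) c := fun c =>
    mono_hasDerivAt_nonneg hmono (hη'd c).hasDerivAt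
  have hmonoInt : (∫ c in uR..uL, deriv (deriv η) c * (A u - A c)) ≤
      ∫ c in uR..uL, deriv (deriv η) c * (deriv A u * (u - c)) := by
    refine intervalIntegral.integral_mono_on hle (hcont2.intervalIntegrable _ _)
      ((hη''c.mul (continuous_const.mul (continuous_const.sub continuous_id))).intervalIntegrable
        _ _) ?_
    intro c _
    exact mul_le_mul_of_nonneg_left (support_line hAc hAd u c) (hnn c)
  have hlast : (∫ c in uR..uL, deriv (deriv η) c * (deriv A u * (u - c))) = 0 := by
    have hfe : (fun c => deriv (deriv η) c * (deriv A u * (u - c))) =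
        fun c => deriv A u * (deriv (deriv η) c * (u - c)) := by
      funext c; ring
    rw [hfe, intervalIntegral.integral_const_mul, hDint, mul_zero]
  rw [hF]
  rw [hlast] at hmonoInt
  exact hmonoInt

theorem stmt_13 (A η q : ℝ → ℝ)
    (hA : ContDiff ℝ 2 A) (hAc : StrictConvexOn ℝ Set.univ A)
    (hη : ContDiff ℝ 2 η) (hηc : StrictConvexOn ℝ Set.univ η)
    (hqd : Differentiable ℝ q)
    (hq : ∀ u, deriv q u = deriv η u * deriv A u)
    (ε : ℝ) (hε : 0 < ε) :
    ContinuousOn (Veps A η q ε) {p : ℝ × ℝ × ℝ | p.2.2 ≤ p.2.1} ∧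
      ∃ U : Set (ℝ × ℝ × ℝ), IsOpen U ∧
        {p : ℝ × ℝ × ℝ | p.2.2 ≤ p.2.1 ∧
            (η p.1 - η p.2.2 - deriv η p.2.2 * (p.1 - p.2.2)) -
              (η p.1 - η p.2.1 - deriv η p.2.1 * (p.1 - p.2.1)) = 0} ⊆ U ∧
        ∀ p ∈ U, Veps A η q ε p = 0 := by
  have hηC : Continuous η := hη.continuous
  have hη'C : Continuous (deriv η) := hη.continuous_deriv one_le_two
  have hAC : Continuous A := hA.continuous
  have hqC : Continuous q := hqd.continuous
  have hDf : Continuous (Dfun η) := by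
    unfold Dfun
    fun_prop
  have hNf : Continuous (Nfun A η q) := by
    unfold Nfun
    fun_prop
  -- U = where the numerator (with ε) is negative
  set U : Set (ℝ × ℝ × ℝ) := {p | Nfun A η q p - ε < 0} with hU
  have hUopen : IsOpen U := isOpen_lt (hNf.sub continuous_const) continuous_const
  have hU0 : ∀ p ∈ U, Veps A η q ε p = 0 := by
    intro p hp
    rw [Veps_eq]
    split_ifs with h
    · rfl
    · rw [max_eq_left (le_of_lt hp), zero_div]
  have hsub : {p : ℝ × ℝ × ℝ | p.2.2 ≤ p.2.1 ∧
      (η p.1 - η p.2.2 - deriv η p.2.2 * (p.1 - p.2.2)) -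
        (η p.1 - η p.2.1 - deriv η p.2.1 * (p.1 - p.2.1)) = 0} ⊆ U := by
    rintro p ⟨hle, hD⟩
    have := key_ineq A η q hA hAc hη hηc hqd hq p.1 p.2.1 p.2.2 hle hD
    simp only [hU, Set.mem_setOf_eq, Nfun]
    linarith
  refine ⟨?_, U, hUopen, hsub, hU0⟩
  intro p hp
  by_cases hD : Dfun η p = 0
  · have hpU : p ∈ U := hsub ⟨hp, hD⟩
    have hev : Veps A η q ε =ᶠ[nhds p] fun _ => 0 := by
      filter_upwards [hUopen.mem_nhds hpU] with x hx
      exact hU0 x hx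
    exact (continuousAt_const.congr hev.symm).continuousWithinAt
  · have hV : ContinuousAt (fun p => max 0 (Nfun A η q p - ε) / Dfun η p) p :=
      ((continuous_const.max (hNf.sub continuous_const)).continuousAt).div
        hDf.continuousAt hD
    have hev : (fun p => max 0 (Nfun A η q p - ε) / Dfun η p) =ᶠ[nhds p]
        Veps A η q ε := by
      filter_upwards [(isOpen_compl_iff.mpr isClosed_singleton).preimage hDf |>.mem_nhds hD]
        with x hx
      rw [Veps_eq, if_neg (by simpa using hx)]
    exact (hV.congr hev).continuousWithinAt
end

section
/- For every f ∈ L²([-M,M]) and ε > 0 there exists f_ε : ℝ → ℝ that is piecewise Lipschitz with finitely many discontinuity points x₁ < ⋯ < x_N, all contained in (-M,M), nondecreasing on each interval between consecutive discontinuities, with left limit ≥ right limit at each discontinuity, such that ‖f - f_ε‖_{L²([-M,M])} < ε and ‖f_ε‖_{L^∞(ℝ)} ≤ ‖f‖_{L^∞([-M,M])}. -/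
open MeasureTheory

open Set Filter in
private lemma clamp_proj {a C y : ℝ} (ha : |a| ≤ C) :
    |a - max (-C) (min C y)| ≤ |a - y| := by
  have h1 : -C ≤ a := neg_le_of_abs_le ha
  have h2 : a ≤ C := le_of_abs_le ha
  have hC : -C ≤ C := h1.trans h2
  rcases le_total C y with h | h
  · rw [min_eq_left h, max_eq_right hC]
    rw [abs_of_nonpos (by linarith), abs_of_nonpos (by linarith)]; linarith
  · rw [min_eq_right h]
    rcases le_total y (-C) with h' | h'
    · rw [max_eq_left h', abs_of_nonneg (by linarith), abs_of_nonneg (by linarith)]; linarith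
    · rw [max_eq_right h']

set_option maxHeartbeats 2000000 in
open Set Filter in
private lemma construct (M ε : ℝ) (hM : 0 < M) (hε : 0 < ε)
    (f : ℝ → ℝ)
    (hf : MemLp f 2 (volume.restrict (Set.Icc (-M) M)))
    (c : ℝ → ℝ) (hcmono : Monotone c) (hclip : LipschitzWith 1 c)
    (hcproj : ∀ᵐ x ∂(volume.restrict (Set.Icc (-M) M)), ∀ y, |f x - c y| ≤ |f x - y|) :
    ∃ (fε : ℝ → ℝ) (N : ℕ) (xs : Fin N → ℝ) (llim rlim : Fin N → ℝ),
      StrictMono xs ∧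
      (∀ i, xs i ∈ Set.Ioo (-M) M) ∧
      (∀ a b : ℝ, a < b → (∀ i, xs i ∉ Set.Ioo a b) →
        MonotoneOn fε (Set.Ioo a b) ∧ ∃ L, LipschitzOnWith L fε (Set.Ioo a b)) ∧
      (∀ i, Filter.Tendsto fε (nhdsWithin (xs i) (Set.Iio (xs i))) (nhds (llim i)) ∧
            Filter.Tendsto fε (nhdsWithin (xs i) (Set.Ioi (xs i))) (nhds (rlim i)) ∧
            rlim i ≤ llim i) ∧
      eLpNorm (fun x => f x - fε x) 2 (volume.restrict (Set.Icc (-M) M)) <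
        ENNReal.ofReal ε ∧
      (∀ x, ∃ y, fε x = c y) := by
  set μ := volume.restrict (Set.Icc (-M) M) with hμdef
  -- step 1 : continuous approximation
  have hf' : MemLp ((Set.Icc (-M) M).indicator f) 2 volume := by
    constructor
    · exact (aestronglyMeasurable_indicator_iff measurableSet_Icc).2 hf.1
    · rw [eLpNorm_indicator_eq_eLpNorm_restrict measurableSet_Icc]; exact hf.2
  obtain ⟨g, -, hg_close, hg_cont, -⟩ :=
    hf'.exists_hasCompactSupport_eLpNorm_sub_le (by norm_num : (2 : ENNReal) ≠ ⊤)
      (ε := ENNReal.ofReal (ε / 2)) (by simp [ENNReal.ofReal_eq_zero]; linarith)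
  have hfg : eLpNorm (fun x => f x - g x) 2 μ ≤ ENNReal.ofReal (ε / 2) := by
    have h1 : (fun x => f x - g x) =ᵐ[μ]
        (fun x => (Set.Icc (-M) M).indicator f x - g x) := by
      filter_upwards [(indicator_ae_eq_restrict (μ := volume) (f := f)
        measurableSet_Icc)] with x hx
      rw [hx]
    rw [eLpNorm_congr_ae h1]
    calc eLpNorm (fun x => (Set.Icc (-M) M).indicator f x - g x) 2 μ
        ≤ eLpNorm (fun x => (Set.Icc (-M) M).indicator f x - g x) 2 volume :=
          eLpNorm_mono_measure _ Measure.restrict_le_self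
      _ ≤ ENNReal.ofReal (ε / 2) := hg_close
  -- parameters
  have h2M : (0:ℝ) < 2 * M := by linarith
  set s := Real.sqrt (2 * M) with hsdef
  have hs0 : 0 ≤ s := Real.sqrt_nonneg _
  set ε' := ε / (8 * (s + 1)) with hε'def
  have hε' : 0 < ε' := by positivity
  -- uniform continuity of g on the compact interval
  obtain ⟨δ₀, hδ₀, H⟩ := Metric.uniformContinuousOn_iff.1
    ((isCompact_Icc (a := -M) (b := M)).uniformContinuousOn_of_continuous
      hg_cont.continuousOn) ε' hε'
  obtain ⟨m, hm⟩ := exists_nat_gt (2 * M / δ₀)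
  set δ := 2 * M / ((m : ℝ) + 1) with hδdef
  have hδ : 0 < δ := by positivity
  have hmδ : ((m : ℝ) + 1) * δ = 2 * M := by
    rw [hδdef]; field_simp
  have hδδ₀ : δ < δ₀ := by
    rw [hδdef, div_lt_iff₀ (by positivity)]
    have h1 : 2 * M / δ₀ < (m : ℝ) + 1 := hm.trans_le (by linarith)
    calc 2 * M = (2 * M / δ₀) * δ₀ := by field_simp
      _ < ((m : ℝ) + 1) * δ₀ := mul_lt_mul_of_pos_right h1 hδ₀
      _ = δ₀ * ((m : ℝ) + 1) := by ring
  set K := ε' / δ with hKdef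
  have hK : 0 ≤ K := by positivity
  have hKδ : K * δ = ε' := by rw [hKdef]; field_simp
  set idx : ℝ → ℤ := fun x => min (m : ℤ) (max 0 ⌊(x + M) / δ⌋) with hidx
  set p : ℝ → ℝ := fun x => -M + (idx x : ℝ) * δ with hp
  have hpval : ∀ z, p z = -M + ((idx z : ℤ) : ℝ) * δ := fun z => rfl
  set f0 : ℝ → ℝ := fun x => g (p x) + K * (x - p x) with hf0
  set fε : ℝ → ℝ := fun x => c (f0 x) with hfε
  set xs : Fin m → ℝ := fun i => -M + ((i : ℝ) + 1) * δ with hxs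
  set llim : Fin m → ℝ := fun i => c (g (-M + (i : ℝ) * δ) + ε') with hllim
  set rlim : Fin m → ℝ := fun i => c (g (-M + ((i : ℝ) + 1) * δ)) with hrlim
  -- basic idx facts
  have idx_nonneg : ∀ x, 0 ≤ idx x :=
    fun x => le_min (Int.natCast_nonneg m) (le_max_left _ _)
  have idx_le : ∀ x, idx x ≤ m := fun x => min_le_left _ _
  have idx_mono : Monotone idx := by
    intro x y hxy
    exact min_le_min le_rfl (max_le_max le_rfl (Int.floor_le_floor (by gcongr)))
  have idx_ge : ∀ (k : ℤ) (x : ℝ), k ≤ m → -M + (k : ℝ) * δ ≤ x → k ≤ idx x := by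
    intro k x hkm hx
    refine le_min hkm (le_max_of_le_right (Int.le_floor.2 ?_))
    rw [le_div_iff₀ hδ]
    linarith
  have idx_lt : ∀ (k : ℤ) (x : ℝ), 0 < k → x < -M + (k : ℝ) * δ → idx x < k := by
    intro k x hk hx
    have h1 : ⌊(x + M) / δ⌋ < k := Int.floor_lt.2 (by rw [div_lt_iff₀ hδ]; linarith)
    calc idx x ≤ max 0 ⌊(x + M) / δ⌋ := min_le_right _ _
      _ < k := max_lt hk h1
  have idx_eq : ∀ (k : ℤ) (x : ℝ), 0 ≤ k → k ≤ m → -M + (k : ℝ) * δ ≤ x →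
      x < -M + ((k : ℝ) + 1) * δ → idx x = k := by
    intro k x hk0 hkm h1 h2
    have ha := idx_ge k x hkm h1
    have hb := idx_lt (k + 1) x (by omega) (by push_cast; linarith)
    omega
  -- idx is constant on intervals without breakpoints
  have idx_const : ∀ a b : ℝ, (∀ i : Fin m, xs i ∉ Set.Ioo a b) →
      ∀ x ∈ Set.Ioo a b, ∀ y ∈ Set.Ioo a b, x ≤ y → idx x = idx y := by
    intro a b hno x hx y hy hxy
    by_contra hne
    have hlt : idx x < idx y := lt_of_le_of_ne (idx_mono hxy) hne
    set k := idx y with hk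
    have hk1 : 1 ≤ k := by have := idx_nonneg x; omega
    have hkm : k ≤ m := idx_le y
    have hmpos : 0 < m := by omega
    have hklt : (k - 1).toNat < m := by omega
    set i : Fin m := ⟨(k - 1).toNat, hklt⟩ with hi
    have hcast : (((k - 1).toNat : ℕ) : ℝ) = (k : ℝ) - 1 := by
      have h := Int.toNat_of_nonneg (by omega : (0:ℤ) ≤ k - 1)
      exact_mod_cast congrArg (Int.cast : ℤ → ℝ) h
    have hxsi : xs i = -M + (k : ℝ) * δ := by
      show -M + (((i : ℕ) : ℝ) + 1) * δ = -M + (k : ℝ) * δ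
      have hiv : ((i : ℕ) : ℝ) = (k : ℝ) - 1 := by rw [hi]; exact hcast
      rw [hiv]; ring
    have hxlt : x < xs i := by
      rw [hxsi]
      by_contra hcon
      push_neg at hcon
      exact absurd (idx_ge k x hkm hcon) (by omega)
    have hley : xs i ≤ y := by
      rw [hxsi]
      by_contra hcon
      push_neg at hcon
      exact absurd (idx_lt k y (by omega) hcon) (by omega)
    exact hno i ⟨hx.1.trans hxlt, lt_of_le_of_lt hley hy.2⟩
  -- monotone + lipschitz on pieces
  have hML : ∀ a b : ℝ, a < b → (∀ i, xs i ∉ Set.Ioo a b) →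
      MonotoneOn fε (Set.Ioo a b) ∧ ∃ L, LipschitzOnWith L fε (Set.Ioo a b) := by
    intro a b hab hno
    constructor
    · intro x hx y hy hxy
      have hpxy : p x = p y := by
        rw [hp]; simp only [idx_const a b hno x hx y hy hxy]
      apply hcmono
      rw [hf0]
      simp only [hpxy]
      have : K * (y - p y) - K * (x - p y) = K * (y - x) := by ring
      nlinarith [mul_nonneg hK (by linarith : (0:ℝ) ≤ y - x)]
    · have hinner : LipschitzOnWith ⟨K, hK⟩ f0 (Set.Ioo a b) := by
        apply LipschitzOnWith.of_dist_le_mul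
        intro x hx y hy
        have hpxy : p x = p y := by
          rcases le_total x y with h | h
          · rw [hp]; simp only [idx_const a b hno x hx y hy h]
          · rw [hp]; simp only [idx_const a b hno y hy x hx h]
        have heq : f0 x - f0 y = K * (x - y) := by
          rw [hf0]; simp only [hpxy]; ring
        rw [Real.dist_eq, Real.dist_eq, heq, abs_mul, abs_of_nonneg hK]
        exact le_of_eq rfl
      exact ⟨1 * ⟨K, hK⟩, hclip.comp_lipschitzOnWith hinner⟩
  -- limits at breakpoints
  have hlim : ∀ i : Fin m,
      Filter.Tendsto fε (nhdsWithin (xs i) (Set.Iio (xs i))) (nhds (llim i)) ∧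
      Filter.Tendsto fε (nhdsWithin (xs i) (Set.Ioi (xs i))) (nhds (rlim i)) ∧
      rlim i ≤ llim i := by
    intro i
    have him : ((i : ℕ) : ℤ) < m := by exact_mod_cast i.2
    have hxsi : xs i = -M + ((i : ℝ) + 1) * δ := rfl
    have hbile : -M + (i : ℝ) * δ ≤ -M + ((i : ℝ) + 1) * δ := by nlinarith
    constructor
    · -- left limit
      have hcont : Filter.Tendsto (fun x => c (g (-M + (i : ℝ) * δ) +
            K * (x - (-M + (i : ℝ) * δ)))) (nhdsWithin (xs i) (Set.Iio (xs i)))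
            (nhds (llim i)) := by
        have h1 : Filter.Tendsto (fun x : ℝ => c (g (-M + (i : ℝ) * δ) +
            K * (x - (-M + (i : ℝ) * δ)))) (nhds (xs i))
            (nhds (c (g (-M + (i : ℝ) * δ) + K * (xs i - (-M + (i : ℝ) * δ))))) :=
          Continuous.tendsto (hclip.continuous.comp (continuous_const.add
            (continuous_const.mul (continuous_id.sub continuous_const)))) _
        have h2 : K * (xs i - (-M + (i : ℝ) * δ)) = ε' := by
          rw [hxsi, show -M + ((i : ℝ) + 1) * δ - (-M + (i : ℝ) * δ) = δ by ring, hKδ]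
        rw [h2] at h1
        exact h1.mono_left nhdsWithin_le_nhds
      apply hcont.congr'
      have hmemL : Set.Ioo (xs i - δ) (xs i) ∈ nhdsWithin (xs i) (Set.Iio (xs i)) :=
        Ioo_mem_nhdsLT_of_mem ⟨by linarith, le_refl (xs i)⟩
      filter_upwards [hmemL] with x hx
      have hix : idx x = (i : ℕ) := by
        apply idx_eq _ _ (Int.natCast_nonneg _) him.le
        · push_cast; rw [hxsi] at hx; linarith [hx.1]
        · push_cast; rw [hxsi] at hx; linarith [hx.2]
      have hpx : p x = -M + (i : ℝ) * δ := by
        rw [hp]; simp only [hix]; push_cast; ring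
      rw [hfε, hf0]
      simp only [hpx]
    constructor
    · -- right limit
      have hcont : Filter.Tendsto (fun x => c (g (xs i) + K * (x - xs i)))
            (nhdsWithin (xs i) (Set.Ioi (xs i))) (nhds (rlim i)) := by
        have h1 : Filter.Tendsto (fun x : ℝ => c (g (xs i) + K * (x - xs i)))
            (nhds (xs i)) (nhds (c (g (xs i) + K * (xs i - xs i)))) :=
          Continuous.tendsto (hclip.continuous.comp (continuous_const.add
            (continuous_const.mul (continuous_id.sub continuous_const)))) _
        simp only [sub_self, mul_zero, add_zero] at h1
        exact h1.mono_left nhdsWithin_le_nhds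
      apply hcont.congr'
      have hmemR : Set.Ioo (xs i) (xs i + δ) ∈ nhdsWithin (xs i) (Set.Ioi (xs i)) :=
        Ioo_mem_nhdsGT_of_mem ⟨le_refl (xs i), by linarith⟩
      filter_upwards [hmemR] with x hx
      have hix : idx x = (i : ℕ) + 1 := by
        apply idx_eq _ _ (by omega) (by omega)
        · push_cast; rw [hxsi] at hx; linarith [hx.1]
        · push_cast; rw [hxsi] at hx; linarith [hx.2]
      have hpx : p x = xs i := by
        rw [hp]; simp only [hix]; rw [hxsi]; push_cast; ring
      rw [hfε, hf0]
      simp only [hpx]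
    · -- downward jump
      have hbi : -M + (i : ℝ) * δ ∈ Set.Icc (-M) M := by
        constructor
        · nlinarith
        · have : (i : ℝ) + 1 ≤ (m : ℝ) + 1 := by
            have : ((i : ℕ) : ℝ) < m := by exact_mod_cast i.2
            linarith
          nlinarith
      have hsi : xs i ∈ Set.Icc (-M) M := by
        rw [hxsi]
        constructor
        · nlinarith
        · have : (i : ℝ) + 1 ≤ (m : ℝ) := by
            have : ((i : ℕ) : ℝ) + 1 ≤ (m : ℝ) := by exact_mod_cast i.2
            linarith
          nlinarith
      have hd := H (-M + (i : ℝ) * δ) hbi (xs i) hsi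
        (by rw [Real.dist_eq, hxsi, show -M + (i : ℝ) * δ - (-M + ((i : ℝ) + 1) * δ) = -δ by ring,
              abs_neg, abs_of_nonneg hδ.le]; exact hδδ₀)
      rw [Real.dist_eq, hxsi] at hd
      have habs := abs_lt.1 hd
      exact hcmono (by linarith [habs.1, habs.2])
  -- pointwise error bound
  have hpt : ∀ x ∈ Set.Icc (-M) M, |g x - f0 x| ≤ 2 * ε' := by
    intro x hx
    have hxM : 0 ≤ x + M := by linarith [hx.1]
    have hfl0 : 0 ≤ ⌊(x + M) / δ⌋ := Int.floor_nonneg.2 (by positivity)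
    have hple : p x ≤ x := by
      have h1 : idx x ≤ ⌊(x + M) / δ⌋ :=
        (min_le_right _ _).trans (by rw [max_eq_right hfl0])
      have h2 : ((idx x : ℤ) : ℝ) ≤ (x + M) / δ :=
        le_trans (by exact_mod_cast h1) (Int.floor_le _)
      have h3 := (le_div_iff₀ hδ).1 h2
      rw [hpval]; linarith
    have hxp : x - p x ≤ δ := by
      rcases le_or_gt ⌊(x + M) / δ⌋ (m : ℤ) with h | h
      · have hix : idx x = ⌊(x + M) / δ⌋ := by
          rw [hidx]; simp only; rw [max_eq_right hfl0, min_eq_right h]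
        have h1 : (x + M) / δ < (⌊(x + M) / δ⌋ : ℝ) + 1 := Int.lt_floor_add_one _
        have h2 := (div_lt_iff₀ hδ).1 h1
        rw [hpval, hix]
        nlinarith
      · have hix : idx x = (m : ℤ) := by
          rw [hidx]; simp only
          rw [max_eq_right hfl0, min_eq_left (by omega)]
        rw [hpval, hix]
        push_cast
        have : x ≤ M := hx.2
        nlinarith
    have hpmem : p x ∈ Set.Icc (-M) M := by
      constructor
      · rw [hpval]
        have : (0:ℝ) ≤ (idx x : ℝ) := by exact_mod_cast idx_nonneg x
        nlinarith
      · exact hple.trans hx.2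
    have hgd := H x hx (p x) hpmem
      (by rw [Real.dist_eq, abs_of_nonneg (by linarith)]; linarith)
    rw [Real.dist_eq] at hgd
    have hKb : K * (x - p x) ≤ ε' := by
      calc K * (x - p x) ≤ K * δ := mul_le_mul_of_nonneg_left hxp hK
        _ = ε' := hKδ
    have h0 : 0 ≤ K * (x - p x) := mul_nonneg hK (by linarith)
    have htri : |g x - f0 x| ≤ |g x - g (p x)| + |K * (x - p x)| := by
      rw [hf0]
      simp only
      calc |g x - (g (p x) + K * (x - p x))|
          = |(g x - g (p x)) - K * (x - p x)| := by ring_nf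
        _ ≤ |g x - g (p x)| + |K * (x - p x)| := abs_sub _ _
    rw [abs_of_nonneg h0] at htri
    linarith
  -- measurability
  have hmeas0 : Measurable f0 := by
    have h1 : Measurable fun x : ℝ => ⌊(x + M) / δ⌋ :=
      ((measurable_id.add_const M).div_const δ).floor
    have hidxm : Measurable idx := measurable_const.min (measurable_const.max h1)
    have hcastm : Measurable fun x => ((idx x : ℤ) : ℝ) :=
      (measurable_from_top (f := (Int.cast : ℤ → ℝ))).comp hidxm
    have hpm : Measurable p := measurable_const.add (hcastm.mul_const δ)
    exact (hg_cont.measurable.comp hpm).add ((measurable_id.sub hpm).const_mul K)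
  have hmeasε : Measurable fε := hclip.continuous.measurable.comp hmeas0
  -- L² error
  have hmono : eLpNorm (fun x => f x - fε x) 2 μ ≤ eLpNorm (fun x => f x - f0 x) 2 μ := by
    apply eLpNorm_mono_ae
    filter_upwards [hcproj] with x hx
    simpa [Real.norm_eq_abs] using hx (f0 x)
  have hsplit : eLpNorm (fun x => f x - f0 x) 2 μ ≤
      eLpNorm (fun x => f x - g x) 2 μ + eLpNorm (fun x => g x - f0 x) 2 μ := by
    have heq : (fun x => f x - f0 x) =
        (fun x => f x - g x) + (fun x => g x - f0 x) := by
      funext x; simp [Pi.add_apply]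
    rw [heq]
    exact eLpNorm_add_le (hf.1.sub hg_cont.aestronglyMeasurable)
      (hg_cont.aestronglyMeasurable.sub hmeas0.aestronglyMeasurable) one_le_two
  have hbound : eLpNorm (fun x => g x - f0 x) 2 μ ≤
      ENNReal.ofReal s * ENNReal.ofReal (2 * ε') := by
    have h1 : ∀ᵐ x ∂μ, ‖g x - f0 x‖ ≤ 2 * ε' := by
      filter_upwards [ae_restrict_mem measurableSet_Icc] with x hx
      simpa [Real.norm_eq_abs] using hpt x hx
    calc eLpNorm (fun x => g x - f0 x) 2 μ
        ≤ μ Set.univ ^ (2 : ENNReal).toReal⁻¹ * ENNReal.ofReal (2 * ε') :=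
          eLpNorm_le_of_ae_bound h1
      _ = ENNReal.ofReal s * ENNReal.ofReal (2 * ε') := by
          congr 1
          rw [hμdef, Measure.restrict_apply_univ, Real.volume_Icc]
          rw [show ((2 : ENNReal).toReal⁻¹) = ((2:ℝ)⁻¹) by norm_num]
          rw [ENNReal.ofReal_rpow_of_pos (by linarith : (0:ℝ) < M - -M)]
          congr 1
          rw [hsdef, show M - -M = 2 * M by ring, Real.sqrt_eq_rpow]
          norm_num
  have herr : eLpNorm (fun x => f x - fε x) 2 μ < ENNReal.ofReal ε := by
    calc eLpNorm (fun x => f x - fε x) 2 μ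
        ≤ eLpNorm (fun x => f x - f0 x) 2 μ := hmono
      _ ≤ eLpNorm (fun x => f x - g x) 2 μ + eLpNorm (fun x => g x - f0 x) 2 μ := hsplit
      _ ≤ ENNReal.ofReal (ε / 2) + ENNReal.ofReal s * ENNReal.ofReal (2 * ε') :=
          add_le_add hfg hbound
      _ = ENNReal.ofReal (ε / 2 + s * (2 * ε')) := by
          rw [← ENNReal.ofReal_mul hs0, ← ENNReal.ofReal_add (by linarith) (by positivity)]
      _ < ENNReal.ofReal ε := by
          rw [ENNReal.ofReal_lt_ofReal_iff hε]
          have hden : (0:ℝ) < 8 * (s + 1) := by positivity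
          have hεq : ε' * (8 * (s + 1)) = ε := by
            rw [hε'def]; field_simp
          nlinarith [mul_nonneg hs0 hε'.le]
  refine ⟨fε, m, xs, llim, rlim, ?_, ?_, hML, hlim, herr, fun x => ⟨f0 x, rfl⟩⟩
  · intro i j hij
    have : ((i : ℕ) : ℝ) < ((j : ℕ) : ℝ) := by exact_mod_cast hij
    rw [hxs]
    simp only
    nlinarith
  · intro i
    have h1 : ((i : ℕ) : ℝ) + 1 ≤ (m : ℝ) := by exact_mod_cast i.2
    constructor
    · rw [hxs]; simp only; nlinarith [(by positivity : (0:ℝ) ≤ ((i:ℕ):ℝ))]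
    · rw [hxs]; simp only; nlinarith


theorem stmt_18 (M ε : ℝ) (hM : 0 < M) (hε : 0 < ε)
    (f : ℝ → ℝ)
    (hf : MemLp f 2 (volume.restrict (Set.Icc (-M) M))) :
    ∃ (fε : ℝ → ℝ) (N : ℕ) (xs : Fin N → ℝ) (llim rlim : Fin N → ℝ),
      StrictMono xs ∧
      (∀ i, xs i ∈ Set.Ioo (-M) M) ∧
      (∀ a b : ℝ, a < b → (∀ i, xs i ∉ Set.Ioo a b) →
        MonotoneOn fε (Set.Ioo a b) ∧ ∃ L, LipschitzOnWith L fε (Set.Ioo a b)) ∧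
      (∀ i, Filter.Tendsto fε (nhdsWithin (xs i) (Set.Iio (xs i))) (nhds (llim i)) ∧
            Filter.Tendsto fε (nhdsWithin (xs i) (Set.Ioi (xs i))) (nhds (rlim i)) ∧
            rlim i ≤ llim i) ∧
      eLpNorm (fun x => f x - fε x) 2 (volume.restrict (Set.Icc (-M) M)) <
        ENNReal.ofReal ε ∧
      (∀ C : ℝ, (∀ᵐ x ∂volume.restrict (Set.Icc (-M) M), |f x| ≤ C) →
        ∀ x : ℝ, |fε x| ≤ C) := by
  set μ := volume.restrict (Set.Icc (-M) M) with hμdef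
  by_cases hS : ∃ C : ℝ, ∀ᵐ x ∂μ, |f x| ≤ C
  · -- clamp case
    have hμne : μ ≠ 0 := by
      rw [← MeasureTheory.Measure.measure_univ_ne_zero, hμdef,
        Measure.restrict_apply_univ, Real.volume_Icc]
      simp only [ne_eq, ENNReal.ofReal_eq_zero, not_le]
      linarith
    haveI : (ae μ).NeBot := ae_neBot.2 hμne
    set S := {C : ℝ | ∀ᵐ x ∂μ, |f x| ≤ C} with hSdef
    have hne : S.Nonempty := hS
    have hbdd : BddBelow S := by
      refine ⟨0, fun C hC => ?_⟩
      rw [hSdef, Set.mem_setOf_eq] at hC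
      obtain ⟨x, hx⟩ := hC.exists
      exact (abs_nonneg _).trans hx
    set C₀ := sInf S with hC₀def
    have hC₀S : ∀ᵐ x ∂μ, |f x| ≤ C₀ := by
      have hmem : ∀ n : ℕ, ∀ᵐ x ∂μ, |f x| ≤ C₀ + 1 / (n + 1) := by
        intro n
        obtain ⟨C, hCS, hlt⟩ := exists_lt_of_csInf_lt hne
          (lt_add_of_pos_right _ (by positivity : (0:ℝ) < 1 / (n + 1)))
        rw [hSdef, Set.mem_setOf_eq] at hCS
        exact hCS.mono fun x hx => hx.trans hlt.le
      filter_upwards [ae_all_iff.2 hmem] with x hx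
      by_contra hcon
      push_neg at hcon
      obtain ⟨n, hn⟩ := exists_nat_one_div_lt (by linarith : (0:ℝ) < |f x| - C₀)
      have := hx n
      linarith
    have hC₀0 : 0 ≤ C₀ := by
      obtain ⟨x, hx⟩ := hC₀S.exists
      exact (abs_nonneg _).trans hx
    set c : ℝ → ℝ := fun y => max (-C₀) (min C₀ y) with hcdef
    have hcmono : Monotone c := fun a b hab =>
      max_le_max le_rfl (min_le_min le_rfl hab)
    have hclip : LipschitzWith 1 c := (LipschitzWith.id.const_min C₀).const_max (-C₀)
    have hcproj : ∀ᵐ x ∂μ, ∀ y, |f x - c y| ≤ |f x - y| :=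
      hC₀S.mono fun x hx y => clamp_proj hx
    obtain ⟨fε, N, xs, llim, rlim, h1, h2, h3, h4, h5, h6⟩ :=
      construct M ε hM hε f hf c hcmono hclip hcproj
    refine ⟨fε, N, xs, llim, rlim, h1, h2, h3, h4, h5, fun C hC x => ?_⟩
    obtain ⟨y, hy⟩ := h6 x
    have hC₀C : C₀ ≤ C := csInf_le hbdd (by rw [hSdef, Set.mem_setOf_eq]; exact hC)
    rw [hy]
    have : |c y| ≤ C₀ := by
      rw [abs_le]
      exact ⟨le_max_left _ _, max_le (neg_le_self hC₀0) (min_le_left _ _)⟩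
    linarith
  · obtain ⟨fε, N, xs, llim, rlim, h1, h2, h3, h4, h5, -⟩ :=
      construct M ε hM hε f hf id monotone_id LipschitzWith.id
        (Filter.Eventually.of_forall fun x y => le_rfl)
    exact ⟨fε, N, xs, llim, rlim, h1, h2, h3, h4, h5,
      fun C hC x => absurd ⟨C, hC⟩ hS⟩
end
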